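/- For real numbers x₀, x₁, x₂ with x₁ ≠ 0 and x₂ ≠ 0, the point (y⁰,y¹,y²,y³) = (-x₀/x₁, -x₁/x₂, (x₂² - x₀x₁)/(x₁x₂), -x₀²/(x₁x₂)) satisfies: 1 + y⁰(y¹)² + y¹y² = 0; y¹(y⁰)² - y³ = 0; (y⁰)³ + y⁰y²y³ + (y³)² = 0; y⁰ + y⁰y¹y² + y¹y³ = 0; y⁰y³ - y²(y⁰)² + y¹(y³)² - y³(y²)² = 0; (y⁰)² + y⁰y¹y³ + y²y³ = 0; y⁰y¹ + (y¹)²y³ - y² - y¹(y²)² = 0. -/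

import Mathlib

theorem projected_veronese_eq1_on_cubics (x0 x1 x2 : ℝ)
    (hx1 : x1 ≠ 0) (hx2 : x2 ≠ 0) :
    let y0 := -x0/x1
    let y1 := -x1/x2
    let y2 := (x2^2 - x0*x1)/(x1*x2)
    let y3 := -x0^2/(x1*x2)
    1 + y0*y1^2 + y1*y2 = 0 ∧
    y1*y0^2 - y3 = 0 ∧
    y0^3 + y0*y2*y3 + y3^2 = 0 ∧
    y0 + y0*y1*y2 + y1*y3 = 0 ∧
    y0*y3 - y2*y0^2 + y1*y3^2 - y3*y2^2 = 0 ∧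
    y0^2 + y0*y1*y3 + y2*y3 = 0 ∧
    y0*y1 + y1^2*y3 - y2 - y1*y2^2 = 0 := by
  intro y0 y1 y2 y3
  refine ⟨?_,?_,?_,?_,?_,?_,?_⟩ <;> simp only [y0,y1,y2,y3] <;> field_simp <;> ring
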